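/- Suppose d = d_1 d_2 ⋯ d_k with pairwise coprime d_i, gcd(d, A) = 1 where A = ∏_i a_i, and the L_i(x) = a_i x + b_i satisfy the normalization hypothesis (all a_i share the same prime support, no prime of that support divides any b_j, and every prime factor of a_i b_j − a_j b_i divides all a_l for i ≠ j). Fix j, set m = a_j n + b_j. Then the simultaneous conditions d_i | L_i(n) for all i ≠ j are equivalent to a single congruence m ≡ m_0 (mod a_j · ∏_{i≠j} d_i) for some residue m_0 coprime to a_j ∏_{i≠j} d_i. -/

import Mathlib

private lemma cop_of_primes (x y : ℤ)
    (h : ∀ p : ℕ, p.Prime → (p : ℤ) ∣ x → (p : ℤ) ∣ y → False) :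
    IsCoprime x y := by
  rw [Int.isCoprime_iff_gcd_eq_one]
  by_contra hg
  obtain ⟨p, hp, hpd⟩ := Nat.exists_prime_and_dvd hg
  have hpx : (p : ℤ) ∣ x := (Int.natCast_dvd_natCast.mpr hpd).trans (Int.gcd_dvd_left x y)
  have hpy : (p : ℤ) ∣ y := (Int.natCast_dvd_natCast.mpr hpd).trans (Int.gcd_dvd_right x y)
  exact h p hp hpx hpy

private lemma crt_two (A B x y : ℤ) (h : IsCoprime A B) :
    ∃ n : ℤ, A ∣ n - x ∧ B ∣ n - y := by
  obtain ⟨u, v, huv⟩ := h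
  refine ⟨x * (v * B) + y * (u * A), ⟨(y - x) * u, by linear_combination x * huv⟩,
    ⟨(x - y) * v, by linear_combination y * huv⟩⟩

private lemma crt_finset {ι : Type*} [DecidableEq ι] (s : Finset ι) (d r : ι → ℤ)
    (hcop : ∀ i ∈ s, ∀ j ∈ s, i ≠ j → IsCoprime (d i) (d j)) :
    ∃ n : ℤ, ∀ i ∈ s, d i ∣ n - r i := by
  induction s using Finset.induction_on with
  | empty => exact ⟨0, by simp⟩
  | @insert i s his ih =>
    obtain ⟨n, hn⟩ := ih (fun x hx y hy hxy =>
      hcop x (Finset.mem_insert_of_mem hx) y (Finset.mem_insert_of_mem hy) hxy)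
    have hc : IsCoprime (d i) (∏ l ∈ s, d l) :=
      IsCoprime.prod_right fun l hl =>
        hcop i (Finset.mem_insert_self i s) l (Finset.mem_insert_of_mem hl)
          (fun h => his (h ▸ hl))
    obtain ⟨n', hn1, hn2⟩ := crt_two (d i) (∏ l ∈ s, d l) (r i) n hc
    refine ⟨n', fun x hx => ?_⟩
    rcases Finset.mem_insert.mp hx with rfl | hx
    · exact hn1
    · have : d x ∣ n' - n := (Finset.dvd_prod_of_mem d hx).trans hn2
      have := dvd_add this (hn x hx)
      simpa using this

/-- Under the normalization hypothesis, for pairwise coprime `dᵢ` with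
`gcd(∏ᵢ dᵢ, A) = 1` (`A = ∏ᵢ aᵢ`) and fixed `j`, the simultaneous conditions
`dᵢ ∣ Lᵢ(n)` for `i ≠ j` are equivalent to a single congruence
`aⱼ n + bⱼ ≡ m₀ (mod aⱼ ∏_{i ≠ j} dᵢ)` with `m₀` coprime to the modulus. -/
theorem stmt14 (k : ℕ) (a b : Fin k → ℤ) (hpos : ∀ i, 0 < a i)
    (hsupp : ∀ p : ℕ, p.Prime → ∀ i j, (p : ℤ) ∣ a i → (p : ℤ) ∣ a j)
    (hb : ∀ p : ℕ, p.Prime → ∀ i j, (p : ℤ) ∣ a i → ¬ (p : ℤ) ∣ b j)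
    (hcross : ∀ i j, i ≠ j → ∀ p : ℕ, p.Prime →
      (p : ℤ) ∣ (a i * b j - a j * b i) → ∀ l, (p : ℤ) ∣ a l)
    (d : Fin k → ℤ)
    (hdcop : ∀ i j, i ≠ j → IsCoprime (d i) (d j))
    (hdA : IsCoprime (∏ i, d i) (∏ i, a i))
    (j : Fin k) :
    ∃ m₀ : ℤ, IsCoprime m₀ (a j * ∏ i ∈ Finset.univ.erase j, d i) ∧
      ∀ n : ℤ, (∀ i, i ≠ j → d i ∣ a i * n + b i) ↔
        a j * n + b j ≡ m₀ [ZMOD a j * ∏ i ∈ Finset.univ.erase j, d i] := by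
  classical
  set s : Finset (Fin k) := Finset.univ.erase j with hs
  -- coprimality of each d i with each a l
  have hda : ∀ i l : Fin k, IsCoprime (d i) (a l) := fun i l =>
    ((hdA.of_isCoprime_of_dvd_left (Finset.dvd_prod_of_mem d (Finset.mem_univ i))).of_isCoprime_of_dvd_right
      (Finset.dvd_prod_of_mem a (Finset.mem_univ l)))
  -- choose residues r i with d i ∣ a i * r i + b i
  have hrex : ∀ i : Fin k, ∃ r : ℤ, d i ∣ a i * r + b i := by
    intro i
    obtain ⟨u, v, huv⟩ := (hda i i).symm
    exact ⟨-(b i) * u, ⟨b i * v, by linear_combination (-(b i)) * huv⟩⟩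
  choose r hr using hrex
  obtain ⟨n₀, hn₀⟩ := crt_finset s d r (fun x _ y _ hxy => hdcop x y hxy)
  have hLn₀ : ∀ i ∈ s, d i ∣ a i * n₀ + b i := by
    intro i hi
    have h1 : d i ∣ a i * (n₀ - r i) := Dvd.dvd.mul_left (hn₀ i hi) (a i)
    have := dvd_add h1 (hr i)
    rw [show a i * n₀ + b i = a i * (n₀ - r i) + (a i * r i + b i) by ring]; exact this
  refine ⟨a j * n₀ + b j, ?_, ?_⟩
  · -- coprimality
    refine IsCoprime.mul_right ?_ (IsCoprime.prod_right fun i hi => ?_)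
    · refine cop_of_primes _ _ fun p hp hpm hpa => ?_
      have hpb : (p : ℤ) ∣ b j := by
        have : (p : ℤ) ∣ (a j * n₀ + b j) - a j * n₀ := dvd_sub hpm (hpa.mul_right n₀)
        simpa using this
      exact hb p hp j j hpa hpb
    · have hij : i ≠ j := Finset.ne_of_mem_erase hi
      refine cop_of_primes _ _ fun p hp hpm hpd => ?_
      have hpL : (p : ℤ) ∣ a i * n₀ + b i := hpd.trans (hLn₀ i hi)
      have hcr : (p : ℤ) ∣ (a i * b j - a j * b i) := by
        have : (p : ℤ) ∣ a i * (a j * n₀ + b j) - a j * (a i * n₀ + b i) :=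
          dvd_sub (hpm.mul_left (a i)) (hpL.mul_left (a j))
        convert this using 1; ring
      have hpa : (p : ℤ) ∣ a i := hcross i j hij p hp hcr i
      obtain ⟨u, v, huv⟩ := hda i i
      have : (p : ℤ) ∣ 1 := huv ▸ dvd_add ((hpd.mul_left u)) ((hpa.mul_left v))
      have hp1 : p ∣ 1 := Int.natCast_dvd_natCast.mp (by exact_mod_cast this)
      exact hp.ne_one (Nat.dvd_one.mp hp1)
  · intro n
    have haj : a j ≠ 0 := (hpos j).ne'
    have key : ∀ i ∈ s, (d i ∣ a i * n + b i ↔ d i ∣ n - n₀) := by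
      intro i hi
      constructor
      · intro h
        have h2 : d i ∣ a i * (n - n₀) := by
          have := dvd_sub h (hLn₀ i hi)
          rw [show a i * (n - n₀) = a i * n + b i - (a i * n₀ + b i) by ring]; exact this
        exact (hda i i).dvd_of_dvd_mul_right (by rwa [mul_comm] at h2)
      · intro h
        have h2 : d i ∣ a i * (n - n₀) := h.mul_left (a i)
        have := dvd_add h2 (hLn₀ i hi)
        rw [show a i * n + b i = a i * (n - n₀) + (a i * n₀ + b i) by ring]; exact this
    rw [Int.modEq_iff_dvd,
      show (a j * n₀ + b j) - (a j * n + b j) = a j * (n₀ - n) from by ring,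
      mul_dvd_mul_iff_left haj, dvd_sub_comm]
    constructor
    · intro h
      refine Finset.prod_dvd_of_coprime (fun x hx y hy hxy => hdcop x y hxy) fun i hi => ?_
      exact (key i hi).mp (h i (Finset.ne_of_mem_erase hi))
    · intro h i hij
      have hi : i ∈ s := Finset.mem_erase.mpr ⟨hij, Finset.mem_univ i⟩
      exact (key i hi).mpr ((Finset.dvd_prod_of_mem d hi).trans h)
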